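/- Let σ > 0 and r ≥ 0. The integral over v₀ ∈ [0,∞) of (∫₀^r f_U(u | v₀) du)·f_{V₀}(v₀) dv₀ equals 1 − exp(−r²/(4σ²)), where f_U(u | v) is the Rician density with parameters ν = v, σ, and f_{V₀}(v) = (v/σ²)·exp(−v²/(2σ²)) is the Rayleigh density. -/

import Mathlib

open Real MeasureTheory Set
open scoped Nat

noncomputable def besselI0 (x : ℝ) : ℝ :=
  (1 / Real.pi) * ∫ θ in (0:ℝ)..Real.pi, Real.exp (x * Real.cos θ)

lemma besselI0_continuous : Continuous besselI0 := by
  unfold besselI0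
  exact continuous_const.mul
    (intervalIntegral.continuous_parametric_intervalIntegral_of_continuous'
      (by fun_prop : Continuous (Function.uncurry fun x θ => Real.exp (x * Real.cos θ))) 0 Real.pi)

lemma cos_pow_odd_integral (k : ℕ) : (∫ θ in (0:ℝ)..Real.pi, Real.cos θ ^ (2*k+1)) = 0 := by
  have h := intervalIntegral.integral_comp_sub_left (fun x => Real.cos x ^ (2*k+1)) Real.pi
    (a := 0) (b := Real.pi)
  simp only [sub_zero, sub_self] at h
  have h2 : (∫ x in (0:ℝ)..Real.pi, Real.cos (Real.pi - x) ^ (2*k+1))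
      = - ∫ x in (0:ℝ)..Real.pi, Real.cos x ^ (2*k+1) := by
    rw [← intervalIntegral.integral_neg]
    congr 1
    funext x
    rw [Real.cos_pi_sub]
    rw [Odd.neg_pow ⟨k, by ring⟩]
  rw [h2] at h
  linarith

lemma cos_pow_even_integral (k : ℕ) :
    (∫ θ in (0:ℝ)..Real.pi, Real.cos θ ^ (2*k)) = Real.pi * ((2*k)! / (4^k * (k ! : ℝ)^2)) := by
  induction k with
  | zero => simp
  | succ n ih =>
    have h : 2*(n+1) = 2*n + 2 := by ring
    rw [h, integral_cos_pow]
    simp only [Real.sin_pi, Real.sin_zero, mul_zero, zero_mul, sub_zero, zero_div, zero_add, mul_zero, zero_sub, neg_zero]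
    rw [ih]
    have h1 : ((2*n+2)! : ℝ) = (2*n+2) * ((2*n+1) * (2*n)!) := by
      push_cast [Nat.factorial_succ]
      ring
    have h2 : ((n+1)! : ℝ) = (n+1) * n ! := by push_cast [Nat.factorial_succ]; ring
    rw [h1, h2]
    have hn1 : ((2*n:ℕ):ℝ) + 1 = 2*(n:ℝ)+1 := by push_cast; ring
    have hn2 : ((2*n:ℕ):ℝ) + 2 = 2*(n:ℝ)+2 := by push_cast; ring
    rw [hn1, hn2]
    have hfac : (0:ℝ) < n ! := by exact_mod_cast Nat.factorial_pos n
    field_simp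
    ring

lemma summable_I0 (x : ℝ) : Summable (fun k : ℕ => x^(2*k) / (4^k * (k ! : ℝ)^2)) := by
  refine Summable.of_nonneg_of_le ?_ ?_ (Real.summable_pow_div_factorial (x^2/4))
  · intro k
    have h : x^(2*k) = (x^2)^k := by rw [pow_mul]
    rw [h]; positivity
  · intro k
    have h1 : x^(2*k) = (x^2)^k := by rw [pow_mul]
    have h2 : ((x^2/4):ℝ)^k = (x^2)^k / 4^k := div_pow _ _ _
    rw [h1, h2, div_div]
    have hfac : (1:ℝ) ≤ (k ! : ℝ) := by exact_mod_cast Nat.one_le_iff_ne_zero.mpr (Nat.factorial_ne_zero k)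
    apply div_le_div_of_nonneg_left (by positivity) (by positivity)
    have h5 : (k ! :ℝ) ≤ (k ! :ℝ)^2 := by nlinarith
    gcongr

lemma besselI0_eq_tsum (x : ℝ) :
    besselI0 x = ∑' k : ℕ, x^(2*k) / (4^k * (k ! : ℝ)^2) := by
  have hexp : ∀ θ : ℝ, Real.exp (x * Real.cos θ) = ∑' n : ℕ, (x * Real.cos θ)^n / n ! := by
    intro θ
    rw [Real.exp_eq_exp_ℝ, NormedSpace.exp_eq_tsum_div]
  unfold besselI0
  simp only [hexp]
  rw [intervalIntegral.integral_of_le Real.pi_pos.le]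
  have hmeas : ∀ n : ℕ, AEStronglyMeasurable (fun θ : ℝ => (x * Real.cos θ)^n / n !)
      (volume.restrict (Ioc 0 Real.pi)) := by
    intro n
    exact Continuous.aestronglyMeasurable (by fun_prop)
  have hptbd : ∀ (n : ℕ) (θ : ℝ), ‖(x * Real.cos θ)^n / (n ! : ℝ)‖ ≤ |x|^n / n ! := by
    intro n θ
    rw [norm_div, norm_pow, Real.norm_eq_abs, Real.norm_eq_abs, abs_mul,
      abs_of_nonneg (show (0:ℝ) ≤ (n ! : ℝ) by positivity)]
    gcongr
    exact mul_le_of_le_one_right (abs_nonneg x) (abs_cos_le_one θ)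
  have hle : ∀ n : ℕ, (∫⁻ θ in Ioc (0:ℝ) Real.pi, ‖(x * Real.cos θ)^n / (n ! : ℝ)‖₊)
      ≤ ENNReal.ofReal (|x|^n / n !) * ENNReal.ofReal Real.pi := by
    intro n
    calc (∫⁻ θ in Ioc (0:ℝ) Real.pi, ‖(x * Real.cos θ)^n / (n ! : ℝ)‖₊)
        ≤ ∫⁻ _θ in Ioc (0:ℝ) Real.pi, ENNReal.ofReal (|x|^n / n !) := by
          apply lintegral_mono
          intro θ
          dsimp only
          rw [← enorm_eq_nnnorm, ← ofReal_norm]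
          exact ENNReal.ofReal_le_ofReal (hptbd n θ)
      _ = ENNReal.ofReal (|x|^n / n !) * volume (Ioc (0:ℝ) Real.pi) := setLIntegral_const _ _
      _ = ENNReal.ofReal (|x|^n / n !) * ENNReal.ofReal Real.pi := by
          rw [Real.volume_Ioc, sub_zero]
  have hne : (∑' n : ℕ, ∫⁻ θ in Ioc (0:ℝ) Real.pi, ‖(x * Real.cos θ)^n / (n ! : ℝ)‖₊) ≠ ⊤ := by
    apply ne_of_lt
    calc (∑' n : ℕ, ∫⁻ θ in Ioc (0:ℝ) Real.pi, ‖(x * Real.cos θ)^n / (n ! : ℝ)‖₊)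
        ≤ ∑' n : ℕ, ENNReal.ofReal (|x|^n / n !) * ENNReal.ofReal Real.pi :=
          ENNReal.tsum_le_tsum hle
      _ = (∑' n : ℕ, ENNReal.ofReal (|x|^n / n !)) * ENNReal.ofReal Real.pi := by
          rw [ENNReal.tsum_mul_right]
      _ < ⊤ := by
          apply ENNReal.mul_lt_top _ ENNReal.ofReal_lt_top
          rw [← ENNReal.ofReal_tsum_of_nonneg (fun n => by positivity)
            (Real.summable_pow_div_factorial |x|)]
          exact ENNReal.ofReal_lt_top
  rw [MeasureTheory.integral_tsum hmeas hne]
  have hterm : ∀ n : ℕ, (∫ θ in Ioc (0:ℝ) Real.pi, (x * Real.cos θ)^n / n !)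
      = x^n / n ! * ∫ θ in (0:ℝ)..Real.pi, Real.cos θ^n := by
    intro n
    rw [← intervalIntegral.integral_of_le Real.pi_pos.le,
      ← intervalIntegral.integral_const_mul]
    congr 1
    funext θ
    rw [mul_pow]
    ring
  simp only [hterm]
  have heven : ∀ k : ℕ, x^(2*k) / (2*k)! * (∫ θ in (0:ℝ)..Real.pi, Real.cos θ^(2*k))
      = Real.pi * (x^(2*k) / (4^k * (k ! : ℝ)^2)) := by
    intro k
    rw [cos_pow_even_integral]
    have h1 : (0:ℝ) < ((2*k)! : ℝ) := by exact_mod_cast Nat.factorial_pos _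
    have h2 : (0:ℝ) < (k ! : ℝ) := by exact_mod_cast Nat.factorial_pos _
    field_simp
  have hodd : ∀ k : ℕ, x^(2*k+1) / (2*k+1)! * (∫ θ in (0:ℝ)..Real.pi, Real.cos θ^(2*k+1))
      = 0 := by
    intro k
    rw [cos_pow_odd_integral, mul_zero]
  rw [← tsum_even_add_odd
    (((summable_I0 x).mul_left Real.pi).congr (fun k => (heven k).symm))
    (summable_zero.congr (fun k => (hodd k).symm))]
  simp only [heven, hodd, tsum_zero, add_zero, tsum_mul_left]
  rw [← mul_assoc]
  rw [one_div, inv_mul_cancel₀ Real.pi_ne_zero, one_mul]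

lemma gaussian_moment {p : ℝ} (hp : 0 < p) (k : ℕ) :
    ∫ v in Ioi (0:ℝ), v^(2*k+1) * Real.exp (-p * v^2) = (k ! : ℝ) / (2 * p^(k+1)) := by
  have hL : EqOn (fun x : ℝ => (2 * x ^ ((2:ℝ)-1)) •
      ((fun t => (1/2 : ℝ) * (t^k * Real.exp (-p * t))) (x^(2:ℝ))))
      (fun x : ℝ => x^(2*k+1) * Real.exp (-p * x^2)) (Ioi 0) := by
    intro x _
    have hx2 : x^(2:ℝ) = x^2 := by
      rw [show ((2:ℝ)) = ((2:ℕ):ℝ) by norm_num, Real.rpow_natCast]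
    have hx1 : x^((2:ℝ)-1) = x := by norm_num
    simp only [hx2, hx1, smul_eq_mul]
    ring
  calc ∫ v in Ioi (0:ℝ), v^(2*k+1) * Real.exp (-p * v^2)
      = ∫ x in Ioi (0:ℝ), (2 * x ^ ((2:ℝ)-1)) •
        ((fun t => (1/2 : ℝ) * (t^k * Real.exp (-p * t))) (x^(2:ℝ))) :=
        (setIntegral_congr_fun measurableSet_Ioi hL).symm
    _ = ∫ t in Ioi (0:ℝ), (1/2 : ℝ) * (t^k * Real.exp (-p * t)) :=
        integral_comp_rpow_Ioi_of_pos (g := fun t => (1/2:ℝ) * (t^k * Real.exp (-p*t))) two_pos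
    _ = (1/2 : ℝ) * ∫ t in Ioi (0:ℝ), t^k * Real.exp (-p * t) := integral_const_mul _ _
    _ = (1/2 : ℝ) * ((1/p)^((k:ℝ)+1) * Real.Gamma ((k:ℝ)+1)) := by
        rw [← integral_rpow_mul_exp_neg_mul_Ioi (show (0:ℝ) < (k:ℝ)+1 by positivity) hp]
        congr 1
        apply setIntegral_congr_fun measurableSet_Ioi
        intro t _
        dsimp only
        rw [show ((k:ℝ)+1-1) = ((k:ℕ):ℝ) by ring, Real.rpow_natCast, neg_mul]
    _ = (k ! : ℝ) / (2 * p^(k+1)) := by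
        rw [Real.Gamma_nat_eq_factorial,
          show ((k:ℝ)+1) = ((k+1:ℕ):ℝ) by push_cast; ring, Real.rpow_natCast]
        field_simp
        rw [← mul_pow, one_div, inv_mul_cancel₀ hp.ne', one_pow]

lemma integrableOn_moment {p : ℝ} (hp : 0 < p) (k : ℕ) :
    IntegrableOn (fun v : ℝ => v^(2*k+1) * Real.exp (-p * v^2)) (Ioi 0) := by
  have h := integrableOn_rpow_mul_exp_neg_mul_sq hp (s := ((2*k+1 : ℕ):ℝ))
    (lt_of_lt_of_le neg_one_lt_zero (Nat.cast_nonneg _))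
  apply h.congr_fun ?_ measurableSet_Ioi
  intro x _
  dsimp only
  rw [Real.rpow_natCast]

lemma integral_besselI0_gaussian {p : ℝ} (hp : 0 < p) (c : ℝ) :
    ∫ v in Ioi (0:ℝ), v * Real.exp (-p * v^2) * besselI0 (c * v)
      = Real.exp (c^2/(4*p)) / (2*p) := by
  have hterm : ∀ v : ℝ, v * Real.exp (-p*v^2) * besselI0 (c*v)
      = ∑' k : ℕ, (c^(2*k) / (4^k * (k ! : ℝ)^2)) * (v^(2*k+1) * Real.exp (-p*v^2)) := by
    intro v
    rw [besselI0_eq_tsum, ← tsum_mul_left]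
    exact tsum_congr fun k => by ring
  simp only [hterm]
  have hval : ∀ k : ℕ, (∫ v in Ioi (0:ℝ),
      (c^(2*k) / (4^k * (k !:ℝ)^2)) * (v^(2*k+1) * Real.exp (-p*v^2)))
      = (c^2/(4*p))^k / (k !:ℝ) * (1/(2*p)) := by
    intro k
    rw [integral_const_mul, gaussian_moment hp k]
    have h1 : c^(2*k) = (c^2)^k := by rw [pow_mul]
    have hk : (0:ℝ) < (k !:ℝ) := by exact_mod_cast Nat.factorial_pos k
    rw [h1, div_pow]
    field_simp
    ring
  have hmeas : ∀ k : ℕ, AEStronglyMeasurable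
      (fun v : ℝ => (c^(2*k) / (4^k * (k !:ℝ)^2)) * (v^(2*k+1) * Real.exp (-p*v^2)))
      (volume.restrict (Ioi 0)) :=
    fun k => Continuous.aestronglyMeasurable (by fun_prop)
  have hInt : ∀ k : ℕ, Integrable
      (fun v : ℝ => (c^(2*k) / (4^k * (k !:ℝ)^2)) * (v^(2*k+1) * Real.exp (-p*v^2)))
      (volume.restrict (Ioi 0)) :=
    fun k => (integrableOn_moment hp k).const_mul _
  have hnn : ∀ k : ℕ, (0:ℝ→ℝ) ≤ᵐ[volume.restrict (Ioi (0:ℝ))]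
      (fun v : ℝ => (c^(2*k) / (4^k * (k !:ℝ)^2)) * (v^(2*k+1) * Real.exp (-p*v^2))) := by
    intro k
    filter_upwards [ae_restrict_mem measurableSet_Ioi] with v hv
    have hc : (0:ℝ) ≤ c^(2*k) := by rw [pow_mul]; positivity
    have hv' : (0:ℝ) < v := hv
    positivity
  have hne : (∑' k : ℕ, ∫⁻ v in Ioi (0:ℝ),
      ‖(c^(2*k) / (4^k * (k !:ℝ)^2)) * (v^(2*k+1) * Real.exp (-p*v^2))‖₊) ≠ ⊤ := by
    have heq : ∀ k : ℕ, (∫⁻ v in Ioi (0:ℝ),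
        ‖(c^(2*k) / (4^k * (k !:ℝ)^2)) * (v^(2*k+1) * Real.exp (-p*v^2))‖₊)
        = ENNReal.ofReal ((c^2/(4*p))^k / (k !:ℝ) * (1/(2*p))) := by
      intro k
      rw [← hval k, MeasureTheory.ofReal_integral_eq_lintegral_ofReal (hInt k) (hnn k)]
      apply lintegral_congr_ae
      filter_upwards [hnn k] with v hv
      rw [← enorm_eq_nnnorm, ← ofReal_norm, Real.norm_eq_abs, abs_of_nonneg hv]
    simp only [heq]
    rw [← ENNReal.ofReal_tsum_of_nonneg (fun k => by positivity)
      (((Real.summable_pow_div_factorial (c^2/(4*p))).mul_right (1/(2*p))))]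
    exact ENNReal.ofReal_ne_top
  rw [MeasureTheory.integral_tsum hmeas hne]
  simp only [hval]
  rw [tsum_mul_right,
    show (∑' k:ℕ, (c^2/(4*p))^k / (k !:ℝ)) = Real.exp (c^2/(4*p)) from by
      rw [Real.exp_eq_exp_ℝ, NormedSpace.exp_eq_tsum_div],
    mul_one_div]

lemma besselI0_nonneg (x : ℝ) : 0 ≤ besselI0 x := by
  rw [besselI0_eq_tsum]
  apply tsum_nonneg
  intro k
  rw [pow_mul]
  positivity

lemma besselI0_le_exp {x : ℝ} (hx : 0 ≤ x) : besselI0 x ≤ Real.exp x := by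
  unfold besselI0
  have h : (∫ θ in (0:ℝ)..Real.pi, Real.exp (x * Real.cos θ))
      ≤ ∫ _θ in (0:ℝ)..Real.pi, Real.exp x := by
    apply intervalIntegral.integral_mono_on Real.pi_pos.le
    · exact Continuous.intervalIntegrable (by fun_prop) _ _
    · exact intervalIntegrable_const
    · intro θ _
      exact Real.exp_le_exp.mpr (mul_le_of_le_one_right hx (Real.cos_le_one θ))
  rw [intervalIntegral.integral_const, sub_zero, smul_eq_mul] at h
  calc (1/Real.pi) * ∫ θ in (0:ℝ)..Real.pi, Real.exp (x * Real.cos θ)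
      ≤ (1/Real.pi) * (Real.pi * Real.exp x) := by
        apply mul_le_mul_of_nonneg_left h (by positivity)
    _ = Real.exp x := by
        field_simp

noncomputable def ricePDF (σ ν u : ℝ) : ℝ :=
  (u / σ ^ 2) * Real.exp (-(u ^ 2 + ν ^ 2) / (2 * σ ^ 2)) * besselI0 (u * ν / σ ^ 2)

noncomputable def marcumQ (α β : ℝ) : ℝ :=
  ∫ y in Set.Ioi β, y * Real.exp (-(y ^ 2 + α ^ 2) / 2) * besselI0 (α * y)

noncomputable def rayleighPDF (σ v : ℝ) : ℝ :=
  (v / σ ^ 2) * Real.exp (-v ^ 2 / (2 * σ ^ 2))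

theorem rayleigh_mixture_of_rice_cdf (σ r : ℝ) (hσ : 0 < σ) (hr : 0 ≤ r) :
    ∫ v in Set.Ioi (0:ℝ), (∫ u in (0:ℝ)..r, ricePDF σ v u) * rayleighPDF σ v =
      1 - Real.exp (-r ^ 2 / (4 * σ ^ 2)) := by
  have hσ' : σ ≠ 0 := hσ.ne'
  have hσ2 : (0:ℝ) < σ^2 := by positivity
  -- Step 1: merge the constant into the inner integral, as a set integral
  have h1 : ∀ v ∈ Ioi (0:ℝ), (∫ u in (0:ℝ)..r, ricePDF σ v u) * rayleighPDF σ v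
      = ∫ u in Ioc (0:ℝ) r, ricePDF σ v u * rayleighPDF σ v := by
    intro v _
    rw [intervalIntegral.integral_of_le hr, ← integral_mul_const]
  rw [setIntegral_congr_fun measurableSet_Ioi h1]
  -- Step 2: Fubini
  have hcont : Continuous (Function.uncurry fun v u => ricePDF σ v u * rayleighPDF σ v) := by
    have hb := besselI0_continuous
    unfold ricePDF rayleighPDF Function.uncurry
    fun_prop
  have hG : Integrable (fun z : ℝ × ℝ =>
      ((r/σ^4 * Real.exp (r^2/σ^2)) * (z.1 * Real.exp (-(1/(4*σ^2)) * z.1^2))) * (1:ℝ))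
      ((volume.restrict (Ioi 0)).prod (volume.restrict (Ioc 0 r))) := by
    have hA : Integrable (fun v : ℝ => (r/σ^4 * Real.exp (r^2/σ^2)) * (v * Real.exp (-(1/(4*σ^2)) * v^2)))
        (volume.restrict (Ioi 0)) :=
      ((integrable_mul_exp_neg_mul_sq (by positivity : (0:ℝ) < 1/(4*σ^2))).integrableOn).const_mul _
    have hB : Integrable (fun _ : ℝ => (1:ℝ)) (volume.restrict (Ioc 0 r)) :=
      integrableOn_const (by rw [Real.volume_Ioc]; exact ENNReal.ofReal_ne_top)
    exact Integrable.mul_prod hA hB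
  have hae : ∀ᵐ z : ℝ×ℝ ∂((volume.restrict (Ioi 0)).prod (volume.restrict (Ioc 0 r))),
      z ∈ (Ioi (0:ℝ)) ×ˢ (Ioc (0:ℝ) r) := by
    rw [Measure.prod_restrict]
    exact ae_restrict_mem (measurableSet_Ioi.prod measurableSet_Ioc)
  have hswap : Integrable (Function.uncurry fun v u => ricePDF σ v u * rayleighPDF σ v)
      ((volume.restrict (Ioi 0)).prod (volume.restrict (Ioc 0 r))) := by
    apply Integrable.mono' hG hcont.aestronglyMeasurable
    filter_upwards [hae] with z hz
    obtain ⟨hv, hu⟩ := hz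
    rw [mem_Ioi] at hv
    obtain ⟨hu0, hur⟩ := hu
    set v := z.1
    set u := z.2
    have hI0nn := besselI0_nonneg (u*v/σ^2)
    have hnn : 0 ≤ ricePDF σ v u * rayleighPDF σ v := by
      unfold ricePDF rayleighPDF
      positivity
    rw [Function.uncurry, Real.norm_eq_abs, abs_of_nonneg hnn]
    unfold ricePDF rayleighPDF
    calc (u/σ^2) * Real.exp (-(u^2+v^2)/(2*σ^2)) * besselI0 (u*v/σ^2)
          * ((v/σ^2) * Real.exp (-v^2/(2*σ^2)))
        ≤ (r/σ^2) * Real.exp (-v^2/(2*σ^2)) * Real.exp (r*v/σ^2) * ((v/σ^2) * 1) := by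
          have g1 : u/σ^2 ≤ r/σ^2 := by gcongr
          have g2 : Real.exp (-(u^2+v^2)/(2*σ^2)) ≤ Real.exp (-v^2/(2*σ^2)) := by
            apply Real.exp_le_exp.mpr
            gcongr
            nlinarith [sq_nonneg u]
          have g3 : besselI0 (u*v/σ^2) ≤ Real.exp (r*v/σ^2) := by
            apply (besselI0_le_exp (by positivity)).trans
            apply Real.exp_le_exp.mpr
            gcongr
          have g4 : Real.exp (-v^2/(2*σ^2)) ≤ 1 := by
            apply Real.exp_le_one_iff.mpr
            apply div_nonpos_of_nonpos_of_nonneg <;> nlinarith [sq_nonneg v]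
          have b1 : 0 ≤ u/σ^2 := by positivity
          have b2 : 0 ≤ v/σ^2 := by positivity
          apply mul_le_mul
          · apply mul_le_mul
            · apply mul_le_mul g1 g2 (Real.exp_pos _).le (by positivity)
            · exact g3
            · exact hI0nn
            · positivity
          · apply mul_le_mul le_rfl g4 (Real.exp_pos _).le b2
          · positivity
          · positivity
      _ = (r*v/σ^4) * Real.exp (r*v/σ^2 - v^2/(2*σ^2)) := by
          rw [show r*v/σ^2 - v^2/(2*σ^2) = -v^2/(2*σ^2) + r*v/σ^2 by ring, Real.exp_add]
          ring
      _ ≤ (r*v/σ^4) * Real.exp (r^2/σ^2 - v^2/(4*σ^2)) := by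
          have hargle : r*v/σ^2 - v^2/(2*σ^2) ≤ r^2/σ^2 - v^2/(4*σ^2) := by
            have h0 : r*v/σ^2 - v^2/(2*σ^2) = (r*v - v^2/2) * (1/σ^2) := by ring
            have h1' : r^2/σ^2 - v^2/(4*σ^2) = (r^2 - v^2/4) * (1/σ^2) := by ring
            rw [h0, h1']
            apply mul_le_mul_of_nonneg_right _ (by positivity)
            nlinarith [sq_nonneg (v/2 - r)]
          gcongr
      _ = ((r/σ^4 * Real.exp (r^2/σ^2)) * (v * Real.exp (-(1/(4*σ^2)) * v^2))) * 1 := by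
          rw [show (r^2/σ^2 - v^2/(4*σ^2) : ℝ) = r^2/σ^2 + (-(1/(4*σ^2)) * v^2) by ring,
            Real.exp_add]
          ring
  rw [show (∫ v in Ioi (0:ℝ), ∫ u in Ioc (0:ℝ) r, ricePDF σ v u * rayleighPDF σ v)
      = ∫ u in Ioc (0:ℝ) r, ∫ v in Ioi (0:ℝ), ricePDF σ v u * rayleighPDF σ v from
    MeasureTheory.integral_integral_swap hswap]
  -- Step 3: evaluate the inner integral
  have hinner : ∀ u ∈ Ioc (0:ℝ) r, (∫ v in Ioi (0:ℝ), ricePDF σ v u * rayleighPDF σ v)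
      = u/(2*σ^2) * Real.exp (-u^2/(4*σ^2)) := by
    intro u _
    have hre : ∀ v ∈ Ioi (0:ℝ), ricePDF σ v u * rayleighPDF σ v
        = (u * Real.exp (-u^2/(2*σ^2)) / σ^4)
          * (v * Real.exp (-(1/σ^2) * v^2) * besselI0 ((u/σ^2) * v)) := by
      intro v _
      unfold ricePDF rayleighPDF
      have e : Real.exp (-(u^2+v^2)/(2*σ^2)) * Real.exp (-v^2/(2*σ^2))
          = Real.exp (-u^2/(2*σ^2)) * Real.exp (-(1/σ^2)*v^2) := by
        rw [← Real.exp_add, ← Real.exp_add]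
        congr 1
        field_simp
        ring
      rw [show u*v/σ^2 = (u/σ^2)*v by ring]
      linear_combination (u/σ^2) * (v/σ^2) * besselI0 ((u/σ^2)*v) * e
    rw [setIntegral_congr_fun measurableSet_Ioi hre, integral_const_mul,
      integral_besselI0_gaussian (show (0:ℝ) < 1/σ^2 by positivity) (u/σ^2)]
    have harg : ((u/σ^2)^2/(4*(1/σ^2)) : ℝ) = u^2/(4*σ^2) := by
      field_simp
    rw [harg]
    have hee : Real.exp (-u^2/(2*σ^2)) * Real.exp (u^2/(4*σ^2)) = Real.exp (-u^2/(4*σ^2)) := by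
      rw [← Real.exp_add]
      congr 1
      field_simp
      ring
    calc (u * Real.exp (-u^2/(2*σ^2))/σ^4) * (Real.exp (u^2/(4*σ^2))/(2*(1/σ^2)))
        = u/(2*σ^2) * (Real.exp (-u^2/(2*σ^2)) * Real.exp (u^2/(4*σ^2))) := by
          field_simp
      _ = u/(2*σ^2) * Real.exp (-u^2/(4*σ^2)) := by rw [hee]
  rw [setIntegral_congr_fun measurableSet_Ioc hinner]
  -- Step 4: final one-dimensional integral
  rw [← intervalIntegral.integral_of_le hr]
  have hderiv : ∀ u ∈ uIcc (0:ℝ) r, HasDerivAt (fun t : ℝ => -Real.exp (-t^2/(4*σ^2)))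
      (u/(2*σ^2) * Real.exp (-u^2/(4*σ^2))) u := by
    intro u _
    have h1' : HasDerivAt (fun t : ℝ => -t^2/(4*σ^2)) (-(2*u)/(4*σ^2)) u := by
      have h0 : HasDerivAt (fun t : ℝ => t^2) (2*u) u := by
        simpa using hasDerivAt_pow 2 u
      simpa [neg_div] using (h0.neg).div_const (4*σ^2)
    have h2 : HasDerivAt (fun t : ℝ => -Real.exp (-t^2/(4*σ^2))) _ u := (h1'.exp).neg
    convert h2 using 1
    ring
  rw [intervalIntegral.integral_eq_sub_of_hasDerivAt hderiv
    (Continuous.intervalIntegrable (by fun_prop) _ _)]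
  norm_num
  ring
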